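/- Let σ : List B and r ∈ B, and set t := π (σ ++ [r] ++ σ.reverse). The following are equivalent: (i) for every j with 0 ≤ j ≤ σ.length, the word (σ.drop j) ++ [r] ++ (σ.drop j).reverse is reduced; (ii) the word σ ++ [r] ++ σ.reverse is reduced; (iii) σ ++ [r] is reduced and p := π (σ ++ [r]) is a t-prefix, i.e., ℓ(p) + ℓ(p⁻¹ * t) = ℓ(t) and 2·ℓ(p) = ℓ(t) + 1. (This is the correspondence between reduced words of reflection-prefixes and saturated chains in the root poset, expressed group-theoretically via the dictionary dp(α_u) = (ℓ(u) − 1)/2 for reflections u.) -/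
import Mathlib

private lemma infix_reduced {B : Type*} {W : Type*} [Group W] {M : CoxeterMatrix B}
    (cs : CoxeterSystem M W) (a b c : List B)
    (h : cs.IsReduced (a ++ b ++ c)) : cs.IsReduced b := by
  have h1 := cs.length_wordProd_le a
  have h2 := cs.length_wordProd_le b
  have h3 := cs.length_wordProd_le c
  have hπ : cs.wordProd (a ++ b ++ c) = cs.wordProd a * cs.wordProd b * cs.wordProd c := by
    rw [cs.wordProd_append, cs.wordProd_append]
  have hle : cs.length (cs.wordProd a * cs.wordProd b * cs.wordProd c)
      ≤ cs.length (cs.wordProd a) + cs.length (cs.wordProd b) + cs.length (cs.wordProd c) := by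
    have h4 := cs.length_mul_le (cs.wordProd a * cs.wordProd b) (cs.wordProd c)
    have h5 := cs.length_mul_le (cs.wordProd a) (cs.wordProd b)
    omega
  unfold CoxeterSystem.IsReduced at h ⊢
  rw [hπ] at h
  simp only [List.length_append] at h
  omega

/-- Correspondence between reduced words of reflection-prefixes
and saturated chains in the root poset. -/
theorem stmt_3 {B : Type*} {W : Type*} [Group W] {M : CoxeterMatrix B}
    (cs : CoxeterSystem M W) (σ : List B) (r : B)
    (t : W) (ht : t = cs.wordProd (σ ++ [r] ++ σ.reverse)) :
    ((∀ j : ℕ, j ≤ σ.length →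
        cs.IsReduced (σ.drop j ++ [r] ++ (σ.drop j).reverse)) ↔
      cs.IsReduced (σ ++ [r] ++ σ.reverse)) ∧
    (cs.IsReduced (σ ++ [r] ++ σ.reverse) ↔
      (cs.IsReduced (σ ++ [r]) ∧
        cs.length (cs.wordProd (σ ++ [r])) +
          cs.length ((cs.wordProd (σ ++ [r]))⁻¹ * t) = cs.length t ∧
        2 * cs.length (cs.wordProd (σ ++ [r])) = cs.length t + 1)) := by
  have hπfull : cs.wordProd (σ ++ [r] ++ σ.reverse)
      = cs.wordProd (σ ++ [r]) * (cs.wordProd σ)⁻¹ := by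
    rw [cs.wordProd_append, cs.wordProd_reverse]
  have hinv : (cs.wordProd (σ ++ [r]))⁻¹ * t = (cs.wordProd σ)⁻¹ := by
    rw [ht, hπfull]; group
  constructor
  · constructor
    · intro h
      simpa using h 0 (Nat.zero_le _)
    · intro h j _
      have hσ : List.take j σ ++ List.drop j σ = σ := List.take_append_drop j σ
      have heq : σ ++ [r] ++ σ.reverse
          = List.take j σ ++ (List.drop j σ ++ [r] ++ (List.drop j σ).reverse)
            ++ (List.take j σ).reverse := by
        conv_lhs => rw [← hσ]
        simp only [List.append_assoc, List.reverse_append, List.cons_append,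
          List.singleton_append, List.nil_append]
      exact infix_reduced cs _ _ _ (heq ▸ h)
  · constructor
    · intro h
      have hlt : cs.length t = 2 * σ.length + 1 := by
        have := h.symm
        rw [← ht] at this
        simp only [List.length_append, List.length_singleton, List.length_reverse] at this
        omega
      have hp1 := cs.length_wordProd_le (σ ++ [r])
      simp only [List.length_append, List.length_singleton] at hp1
      have hp2 := cs.length_wordProd_le σ
      have htri : cs.length t ≤ cs.length (cs.wordProd (σ ++ [r]))
          + cs.length ((cs.wordProd σ)⁻¹) := by
        rw [ht, hπfull]; exact cs.length_mul_le _ _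
      rw [cs.length_inv] at htri
      have hred : cs.IsReduced (σ ++ [r]) := by
        unfold CoxeterSystem.IsReduced
        simp only [List.length_append, List.length_singleton]
        omega
      have hlp : cs.length (cs.wordProd (σ ++ [r])) = σ.length + 1 := by
        have := hred.symm
        simp only [List.length_append, List.length_singleton] at this
        omega
      refine ⟨hred, ?_, by omega⟩
      rw [hinv, cs.length_inv]
      omega
    · rintro ⟨hred, _, h2⟩
      have hlp : cs.length (cs.wordProd (σ ++ [r])) = σ.length + 1 := by
        have := hred.symm
        simp only [List.length_append, List.length_singleton] at this
        omega
      unfold CoxeterSystem.IsReduced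
      rw [← ht]
      simp only [List.length_append, List.length_singleton, List.length_reverse]
      omega
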